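/- Let 1 ≤ m ≤ n and let c_1 < c_2 < ⋯ < c_m and d_1 < d_2 < ⋯ < d_m be indices in {1,…,n}. For u ∈ ℂ define the Capelli minor M(u) = Σ_{σ ∈ S_m} sgn σ · ((u) + E)_{c_{σ(1)},d_1} ((u−1) + E)_{c_{σ(2)},d_2} ⋯ ((u−m+1) + E)_{c_{σ(m)},d_m} ∈ U(gl_n), the product taken in the written order. Then for all 1 ≤ i, j ≤ m and all u ∈ ℂ, the element E_{c_i d_j} commutes with M(u): E_{c_i,d_j} M(u) = M(u) E_{c_i,d_j}. (This is the image in U(gl_n), under the evaluation of the Yangian, of the statement that a quantum minor commutes with the generators t_{c_i d_j}(u).) -/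

import Mathlib

noncomputable section

attribute [local instance 100] LieRing.ofAssociativeRing

abbrev glUEA (n : ℕ) : Type :=
  UniversalEnvelopingAlgebra ℂ (Matrix (Fin n) (Fin n) ℂ)

noncomputable def Egen (n : ℕ) (i j : Fin n) : glUEA n :=
  UniversalEnvelopingAlgebra.ι ℂ (Matrix.single i j 1)

/-- The entry `(w + E)_{ij} = δ_ij · w + E_ij`. -/
noncomputable def capelliEntry (n : ℕ) (w : ℂ) (i j : Fin n) : glUEA n :=
  (if i = j then algebraMap ℂ (glUEA n) w else 0) + Egen n i j

/-- The Capelli minor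
`M(u) = Σ_σ sgn σ · (u+E)_{c_{σ(1)},d_1} ((u−1)+E)_{c_{σ(2)},d_2} ⋯ ((u−m+1)+E)_{c_{σ(m)},d_m}`,
the product taken in the written order. -/
noncomputable def capelliMinorCD (n m : ℕ) (c d : Fin m → Fin n) (u : ℂ) : glUEA n :=
  ∑ σ : Equiv.Perm (Fin m), (Equiv.Perm.sign σ : ℤ) •
    (((List.finRange m).map fun (k : Fin m) =>
        capelliEntry n (u - (k : ℕ)) (c (σ k)) (d k)).prod)

/-! ### Auxiliary list lemmas -/

section Lists
variable {A : Type*} [Ring A]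

lemma list_comm_expand (x : A) : ∀ l : List A,
    x * l.prod = l.prod * x
      + ∑ k : Fin l.length, (l.take k).prod * (x * l.get k - l.get k * x) * (l.drop (k+1)).prod
  | [] => by simp
  | y :: t => by
    simp only [List.length_cons]
    rw [Fin.sum_univ_succ]
    simp only [List.prod_cons, List.take_zero, List.prod_nil, List.get, List.get_cons_zero, List.get_cons_succ', List.drop,
      Fin.val_zero, Fin.val_succ]
    have IH := list_comm_expand x t
    calc x * (y * t.prod) = (x * y - y * x) * t.prod + y * (x * t.prod) := by noncomm_ring
    _ = (x * y - y * x) * t.prod + y * (t.prod * x)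
        + y * ∑ k : Fin t.length, (t.take k).prod * (x * t.get k - t.get k * x) * (t.drop (k+1)).prod := by
        rw [IH]; noncomm_ring
    _ = _ := by
        rw [Finset.mul_sum]
        simp only [List.take_succ_cons, List.prod_cons, List.drop_succ_cons]
        noncomm_ring

variable {m : ℕ}

noncomputable def preP (f : Fin m → A) (k : ℕ) : A := (((List.finRange m).take k).map f).prod
noncomputable def sufP (f : Fin m → A) (k : ℕ) : A := (((List.finRange m).drop (k+1)).map f).prod
noncomputable def lprod (f : Fin m → A) : A := ((List.finRange m).map f).prod

lemma mem_take_finRange {k : ℕ} {t : Fin m} (h : t ∈ (List.finRange m).take k) : (t : ℕ) < k := by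
  obtain ⟨i, hi, rfl⟩ := List.mem_iff_getElem.1 h
  have hi' := hi
  simp only [List.length_take, List.length_finRange, Nat.lt_min] at hi'
  simp [List.getElem_take, hi'.1]

lemma mem_drop_finRange {k : ℕ} {t : Fin m} (h : t ∈ (List.finRange m).drop (k+1)) : k < (t : ℕ) := by
  obtain ⟨i, hi, rfl⟩ := List.mem_iff_getElem.1 h
  simp [List.getElem_drop]
  omega

lemma preP_congr {f g : Fin m → A} {k : ℕ} (h : ∀ t : Fin m, (t : ℕ) < k → f t = g t) :
    preP f k = preP g k := by
  unfold preP
  rw [List.map_congr_left fun t ht => h t (mem_take_finRange ht)]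

lemma sufP_congr {f g : Fin m → A} {k : ℕ} (h : ∀ t : Fin m, k < (t : ℕ) → f t = g t) :
    sufP f k = sufP g k := by
  unfold sufP
  rw [List.map_congr_left fun t ht => h t (mem_drop_finRange ht)]

lemma lprod_split (f : Fin m → A) (k : Fin m) :
    lprod f = preP f k * f k * sufP f k := by
  unfold lprod preP sufP
  have hk : (k : ℕ) < (List.finRange m).length := by simp [k.isLt]
  conv_lhs => rw [← List.take_append_drop (k : ℕ) (List.finRange m),
    List.drop_eq_getElem_cons hk]
  have : (List.finRange m)[(k:ℕ)] = k := by simp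
  rw [this]
  simp [mul_assoc]

lemma lprod_split2 (f : Fin m → A) (k : Fin m) (hk : (k : ℕ) + 1 < m) :
    lprod f = preP f k * (f k * f ⟨(k:ℕ)+1, hk⟩) * sufP f ((k:ℕ)+1) := by
  rw [lprod_split f k]
  have : sufP f (k:ℕ) = f ⟨(k:ℕ)+1, hk⟩ * sufP f ((k:ℕ)+1) := by
    unfold sufP
    have h2 : (k : ℕ) + 1 < (List.finRange m).length := by simpa using hk
    rw [List.drop_eq_getElem_cons h2]
    have : (List.finRange m)[(k:ℕ)+1] = (⟨(k:ℕ)+1, hk⟩ : Fin m) := by simp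
    rw [this, List.map_cons, List.prod_cons]
  rw [this]
  noncomm_ring

lemma lprod_comm_expand (x : A) (f : Fin m → A) :
    x * lprod f = lprod f * x
      + ∑ k : Fin m, preP f k * (x * f k - f k * x) * sufP f k := by
  unfold lprod preP sufP
  rw [list_comm_expand x ((List.finRange m).map f)]
  congr 1
  have hlen : ((List.finRange m).map f).length = m := by simp
  rw [← (finCongr hlen).sum_comp]
  apply Finset.sum_congr rfl
  intro k _
  have h1 : (((List.finRange m).map f).take (k:ℕ)) = ((List.finRange m).take (k:ℕ)).map f := by
    rw [List.map_take]
  have h2 : (((List.finRange m).map f).drop ((k:ℕ)+1)) = ((List.finRange m).drop ((k:ℕ)+1)).map f := by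
    rw [List.map_drop]
  have h3 : ((List.finRange m).map f).get k = f (Fin.cast hlen k) := by
    simp only [List.get_eq_getElem, List.getElem_map, List.getElem_finRange]
    rfl
  simp only [finCongr_apply, Fin.coe_cast]
  rw [h1, h2, h3]
end Lists

/-! ### Commutation relations -/

lemma Egen_comm (n : ℕ) (a b p q : Fin n) :
    Egen n a b * Egen n p q = Egen n p q * Egen n a b
      + ((if b = p then Egen n a q else 0) - (if q = a then Egen n p b else 0)) := by
  have h := (UniversalEnvelopingAlgebra.ι ℂ (L := Matrix (Fin n) (Fin n) ℂ)).map_lie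
    (Matrix.single a b 1) (Matrix.single p q 1)
  simp only [Ring.lie_def] at h
  have hbr : Matrix.single a b (1:ℂ) * Matrix.single p q (1:ℂ)
        - Matrix.single p q (1:ℂ) * Matrix.single a b (1:ℂ)
      = (if b = p then Matrix.single a q (1:ℂ) else 0)
        - (if q = a then Matrix.single p b (1:ℂ) else 0) := by
    by_cases hbp : b = p <;> by_cases hqa : q = a
    · subst hbp; subst hqa; simp
    · subst hbp
      rw [Matrix.single_mul_single_same, Matrix.single_mul_single_of_ne (h := hqa)]
      simp [hqa]
    · subst hqa
      rw [Matrix.single_mul_single_same, Matrix.single_mul_single_of_ne (h := hbp)]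
      simp [hbp]
    · rw [Matrix.single_mul_single_of_ne (h := hbp), Matrix.single_mul_single_of_ne (h := hqa)]
      simp [hbp, hqa]
  rw [hbr] at h
  have h2 : Egen n a b * Egen n p q - Egen n p q * Egen n a b
      = (if b = p then Egen n a q else 0) - (if q = a then Egen n p b else 0) := by
    simp only [Egen]
    rw [← h, map_sub]
    congr 1 <;> split_ifs <;> simp [map_zero]
  linear_combination (norm := noncomm_ring) h2

lemma capelli_L (n : ℕ) (w : ℂ) (a b p q : Fin n) :
    capelliEntry n w a p * capelliEntry n (w-1) b q
      + capelliEntry n w a q * capelliEntry n (w-1) b p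
    = capelliEntry n w b p * capelliEntry n (w-1) a q
      + capelliEntry n w b q * capelliEntry n (w-1) a p := by
  simp only [capelliEntry, add_mul, mul_add, map_sub, map_one]
  rw [Egen_comm n a p b q, Egen_comm n a q b p]
  by_cases h1 : a = p <;> by_cases h2 : a = q <;> by_cases h3 : b = p <;> by_cases h4 : b = q <;>
    subst_vars <;>
    simp [*, Algebra.commutes, sub_mul, mul_sub] <;>
    (try noncomm_ring) <;>
    (try split_ifs <;> simp_all) <;>
    (try noncomm_ring)

lemma comm_entry (n : ℕ) (w : ℂ) (a b p q : Fin n) :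
    Egen n a b * capelliEntry n w p q - capelliEntry n w p q * Egen n a b
      = (if b = p then capelliEntry n w a q else 0)
        - (if q = a then capelliEntry n w p b else 0) := by
  simp only [capelliEntry, mul_add, add_mul]
  rw [Egen_comm n a b p q]
  by_cases h1 : a = b <;> by_cases h2 : p = q <;> by_cases h3 : b = p <;> by_cases h4 : q = a <;>
    subst_vars <;>
    simp [*, Algebra.commutes] <;>
    (try split_ifs <;> simp_all) <;>
    (try noncomm_ring) <;>
    (try intro h; subst h; simp_all)

/-! ### The minor as an lprod -/

variable {n m : ℕ}

noncomputable def fRow (c d : Fin m → Fin n) (u : ℂ) (σ : Equiv.Perm (Fin m)) :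
    Fin m → glUEA n :=
  fun k => capelliEntry n (u - (k : ℕ)) (c (σ k)) (d k)

lemma minor_eq (c d : Fin m → Fin n) (u : ℂ) :
    capelliMinorCD n m c d u
      = ∑ σ : Equiv.Perm (Fin m), (Equiv.Perm.sign σ : ℤ) • lprod (fRow c d u σ) := rfl

lemma sign_sq (π : Equiv.Perm (Fin m)) : (Equiv.Perm.sign π : ℤ) * (Equiv.Perm.sign π : ℤ) = 1 := by
  rcases Int.units_eq_one_or (Equiv.Perm.sign π) with h | h <;> rw [h] <;> norm_num

lemma row_perm (c d : Fin m → Fin n) (u : ℂ) (π : Equiv.Perm (Fin m)) :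
    capelliMinorCD n m (c ∘ π) d u = (Equiv.Perm.sign π : ℤ) • capelliMinorCD n m c d u := by
  rw [minor_eq, minor_eq, Finset.smul_sum]
  apply Fintype.sum_equiv (Equiv.mulLeft π)
  intro σ
  have h : fRow (c ∘ π) d u σ = fRow c d u (π * σ) := rfl
  rw [h]
  simp only [Equiv.coe_mulLeft]
  rw [smul_smul]
  congr 1
  rw [map_mul]
  push_cast
  rw [← mul_assoc, sign_sq, one_mul]

lemma smul_two_zero {x : glUEA n} (h : x + x = 0) : x = 0 := by
  have h2 : (2:ℂ) • x = 0 := by rw [two_smul]; exact h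
  rcases smul_eq_zero.1 h2 with h | h
  · norm_num at h
  · exact h

lemma row_repeat_zero (c d : Fin m → Fin n) (u : ℂ) (t₁ t₂ : Fin m) (hne : t₁ ≠ t₂)
    (hcc : c t₁ = c t₂) : capelliMinorCD n m c d u = 0 := by
  have hcp : c ∘ (Equiv.swap t₁ t₂) = c := by
    funext l
    rcases Equiv.swap_apply_def t₁ t₂ l with _
    by_cases h1 : l = t₁
    · subst h1; simp [Equiv.swap_apply_left, hcc]
    by_cases h2 : l = t₂
    · subst h2; simp [Equiv.swap_apply_right, hcc]
    · simp [Function.comp, Equiv.swap_apply_of_ne_of_ne h1 h2]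
  have h := row_perm c d u (Equiv.swap t₁ t₂)
  rw [hcp, Equiv.Perm.sign_swap hne] at h
  apply smul_two_zero
  nth_rewrite 1 [h]
  simp

lemma col_swap_adj (c d : Fin m → Fin n) (u : ℂ) (k : Fin m) (hk : (k:ℕ)+1 < m) :
    capelliMinorCD n m c (d ∘ Equiv.swap k ⟨(k:ℕ)+1, hk⟩) u = - capelliMinorCD n m c d u := by
  set k' : Fin m := ⟨(k:ℕ)+1, hk⟩ with hk'def
  have hkk' : k ≠ k' := by
    intro h
    have := congrArg Fin.val h
    simp [hk'def] at this
  set s := Equiv.swap k k' with hsdef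
  set d' := d ∘ s with hd'def
  have hsk : s k = k' := Equiv.swap_apply_left k k'
  have hsk' : s k' = k := Equiv.swap_apply_right k k'
  have hsl : ∀ l : Fin m, l ≠ k → l ≠ k' → s l = l :=
    fun l h1 h2 => Equiv.swap_apply_of_ne_of_ne h1 h2
  have hwcast : u - (((k':Fin m) : ℕ) : ℂ) = u - ((k : ℕ) : ℂ) - 1 := by
    simp only [hk'def]
    push_cast
    ring
  -- pointwise 4-term identity
  have key : ∀ σ : Equiv.Perm (Fin m),
      lprod (fRow c d u σ) - lprod (fRow c d u (σ * s))
        + (lprod (fRow c d' u σ) - lprod (fRow c d' u (σ * s))) = 0 := by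
    intro σ
    have hms : ∀ l : Fin m, (σ * s) l = σ (s l) := fun l => rfl
    -- prefixes agree
    have hneq : ∀ t : Fin m, (t:ℕ) < (k:ℕ) → t ≠ k ∧ t ≠ k' := by
      intro t ht
      constructor <;> intro h <;> rw [h] at ht <;> simp [hk'def] at ht <;> omega
    have hneq2 : ∀ t : Fin m, (k:ℕ)+1 < (t:ℕ) → t ≠ k ∧ t ≠ k' := by
      intro t ht
      constructor <;> intro h <;> rw [h] at ht <;> simp [hk'def] at ht <;> omega
    have hagree2 : ∀ (τ : Equiv.Perm (Fin m)) (t : Fin m), t ≠ k → t ≠ k' →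
        fRow c d u (τ * s) t = fRow c d u τ t := by
      intro τ t h1 h2
      simp only [fRow, Equiv.Perm.mul_apply, hsl t h1 h2]
    have hagree3 : ∀ (τ : Equiv.Perm (Fin m)) (t : Fin m), t ≠ k → t ≠ k' →
        fRow c d' u (τ * s) t = fRow c d u τ t := by
      intro τ t h1 h2
      simp only [fRow, hd'def, Function.comp, Equiv.Perm.mul_apply, hsl t h1 h2]
    have hagree4 : ∀ (τ : Equiv.Perm (Fin m)) (t : Fin m), t ≠ k → t ≠ k' →
        fRow c d' u τ t = fRow c d u τ t := by
      intro τ t h1 h2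
      simp only [fRow, hd'def, Function.comp, hsl t h1 h2]
    rw [lprod_split2 (fRow c d u σ) k hk, lprod_split2 (fRow c d u (σ * s)) k hk,
      lprod_split2 (fRow c d' u σ) k hk, lprod_split2 (fRow c d' u (σ * s)) k hk]
    have hpre2 : preP (fRow c d u (σ * s)) (k:ℕ) = preP (fRow c d u σ) (k:ℕ) :=
      preP_congr fun t ht => hagree2 σ t (hneq t ht).1 (hneq t ht).2
    have hpre3 : preP (fRow c d' u σ) (k:ℕ) = preP (fRow c d u σ) (k:ℕ) :=
      preP_congr fun t ht => hagree4 σ t (hneq t ht).1 (hneq t ht).2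
    have hpre4 : preP (fRow c d' u (σ * s)) (k:ℕ) = preP (fRow c d u σ) (k:ℕ) :=
      preP_congr fun t ht => hagree3 σ t (hneq t ht).1 (hneq t ht).2
    have hsuf2 : sufP (fRow c d u (σ * s)) ((k:ℕ)+1) = sufP (fRow c d u σ) ((k:ℕ)+1) :=
      sufP_congr fun t ht => hagree2 σ t (hneq2 t ht).1 (hneq2 t ht).2
    have hsuf3 : sufP (fRow c d' u σ) ((k:ℕ)+1) = sufP (fRow c d u σ) ((k:ℕ)+1) :=
      sufP_congr fun t ht => hagree4 σ t (hneq2 t ht).1 (hneq2 t ht).2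
    have hsuf4 : sufP (fRow c d' u (σ * s)) ((k:ℕ)+1) = sufP (fRow c d u σ) ((k:ℕ)+1) :=
      sufP_congr fun t ht => hagree3 σ t (hneq2 t ht).1 (hneq2 t ht).2
    rw [hpre2, hpre3, hpre4, hsuf2, hsuf3, hsuf4]
    -- middle factors
    have hm1 : fRow c d u σ k = capelliEntry n (u - (k:ℕ)) (c (σ k)) (d k) := rfl
    have hm1' : fRow c d u σ k' = capelliEntry n (u - (k:ℕ) - 1) (c (σ k')) (d k') := by
      simp only [fRow, hwcast]
    have hm2 : fRow c d u (σ * s) k = capelliEntry n (u - (k:ℕ)) (c (σ k')) (d k) := by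
      simp only [fRow, hms, hsk]
    have hm2' : fRow c d u (σ * s) k' = capelliEntry n (u - (k:ℕ) - 1) (c (σ k)) (d k') := by
      simp only [fRow, hms, hsk', hwcast]
    have hm3 : fRow c d' u σ k = capelliEntry n (u - (k:ℕ)) (c (σ k)) (d k') := by
      simp only [fRow, hd'def, Function.comp, hsk]
    have hm3' : fRow c d' u σ k' = capelliEntry n (u - (k:ℕ) - 1) (c (σ k')) (d k) := by
      simp only [fRow, hd'def, Function.comp, hsk', hwcast]
    have hm4 : fRow c d' u (σ * s) k = capelliEntry n (u - (k:ℕ)) (c (σ k')) (d k') := by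
      simp only [fRow, hd'def, Function.comp, hms, hsk]
    have hm4' : fRow c d' u (σ * s) k' = capelliEntry n (u - (k:ℕ) - 1) (c (σ k)) (d k) := by
      simp only [fRow, hd'def, Function.comp, hms, hsk', hwcast]
    have hk'eq : (⟨(k:ℕ)+1, hk⟩ : Fin m) = k' := rfl
    rw [hk'eq, hm1, hm1', hm2, hm2', hm3, hm3', hm4, hm4']
    have hL := capelli_L n (u - (k:ℕ)) (c (σ k)) (c (σ k')) (d k) (d k')
    have hmid : capelliEntry n (u - (k:ℕ)) (c (σ k)) (d k)
          * capelliEntry n (u - (k:ℕ) - 1) (c (σ k')) (d k')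
        - capelliEntry n (u - (k:ℕ)) (c (σ k')) (d k)
          * capelliEntry n (u - (k:ℕ) - 1) (c (σ k)) (d k')
        + (capelliEntry n (u - (k:ℕ)) (c (σ k)) (d k')
          * capelliEntry n (u - (k:ℕ) - 1) (c (σ k')) (d k)
        - capelliEntry n (u - (k:ℕ)) (c (σ k')) (d k')
          * capelliEntry n (u - (k:ℕ) - 1) (c (σ k)) (d k)) = 0 := by
      linear_combination (norm := noncomm_ring) hL
    linear_combination (norm := noncomm_ring)
      preP (fRow c d u σ) (k:ℕ) * hmid * sufP (fRow c d u σ) ((k:ℕ)+1)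
  -- reindexing identity
  have hsign_s : (Equiv.Perm.sign s : ℤ) = -1 := by
    rw [hsdef, Equiv.Perm.sign_swap hkk']
    norm_num
  have hre : ∀ T : Equiv.Perm (Fin m) → glUEA n,
      ∑ σ : Equiv.Perm (Fin m), (Equiv.Perm.sign σ : ℤ) • T (σ * s)
        = - ∑ σ : Equiv.Perm (Fin m), (Equiv.Perm.sign σ : ℤ) • T σ := by
    intro T
    rw [← Finset.sum_neg_distrib]
    apply Fintype.sum_equiv (Equiv.mulRight s)
    intro σ
    simp only [Equiv.coe_mulRight]
    rw [map_mul]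
    push_cast [hsign_s]
    rw [mul_neg_one, neg_smul, neg_neg]
  -- conclude
  have h1 : ∑ σ : Equiv.Perm (Fin m), (Equiv.Perm.sign σ : ℤ) • lprod (fRow c d u (σ * s))
      = - capelliMinorCD n m c d u := by
    rw [hre (fun σ => lprod (fRow c d u σ)), minor_eq]
  have h3 : ∑ σ : Equiv.Perm (Fin m), (Equiv.Perm.sign σ : ℤ) • lprod (fRow c d' u (σ * s))
      = - capelliMinorCD n m c d' u := by
    rw [hre (fun σ => lprod (fRow c d' u σ)), minor_eq]
  have hsum : capelliMinorCD n m c d u + capelliMinorCD n m c d u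
      + (capelliMinorCD n m c d' u + capelliMinorCD n m c d' u) = 0 := by
    have hz : ∑ σ : Equiv.Perm (Fin m), (Equiv.Perm.sign σ : ℤ) •
        (lprod (fRow c d u σ) - lprod (fRow c d u (σ * s))
          + (lprod (fRow c d' u σ) - lprod (fRow c d' u (σ * s)))) = 0 := by
      apply Finset.sum_eq_zero
      intro σ _
      rw [key σ, smul_zero]
    simp only [smul_add, smul_sub] at hz
    rw [Finset.sum_add_distrib, Finset.sum_sub_distrib, Finset.sum_sub_distrib] at hz
    rw [h1, h3, ← minor_eq, ← minor_eq] at hz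
    rw [sub_neg_eq_add, sub_neg_eq_add] at hz
    exact hz
  rw [add_add_add_comm] at hsum
  have h0 := smul_two_zero (x := capelliMinorCD n m c d u + capelliMinorCD n m c d' u) hsum
  exact eq_neg_of_add_eq_zero_right h0

lemma col_repeat_zero_aux (N : ℕ) : ∀ (c d : Fin m → Fin n) (u : ℂ) (t₁ t₂ : Fin m),
    (t₂:ℕ) - (t₁:ℕ) ≤ N → t₁ < t₂ → d t₁ = d t₂ → capelliMinorCD n m c d u = 0 := by
  induction N with
  | zero =>
    intro c d u t₁ t₂ hN hlt _
    rw [Fin.lt_def] at hlt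
    omega
  | succ N ih =>
    intro c d u t₁ t₂ hN hlt heq
    rw [Fin.lt_def] at hlt
    by_cases hadj : (t₂:ℕ) = (t₁:ℕ) + 1
    · -- adjacent case
      have hk : (t₁:ℕ)+1 < m := by omega
      have ht₂ : t₂ = ⟨(t₁:ℕ)+1, hk⟩ := Fin.ext hadj
      have hs : d ∘ Equiv.swap t₁ ⟨(t₁:ℕ)+1, hk⟩ = d := by
        rw [← ht₂]
        funext l
        by_cases h1 : l = t₁
        · subst h1; simp [Equiv.swap_apply_left, heq]
        by_cases h2 : l = t₂
        · subst h2; simp [Equiv.swap_apply_right, heq]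
        · simp [Function.comp, Equiv.swap_apply_of_ne_of_ne h1 h2]
      have h := col_swap_adj c d u t₁ hk
      rw [hs] at h
      apply smul_two_zero
      nth_rewrite 1 [h]
      simp
    · -- non-adjacent
      have h2 : (t₁:ℕ) + 1 < (t₂:ℕ) := by omega
      have ht₂m : (t₂:ℕ) < m := t₂.isLt
      set t₂' : Fin m := ⟨(t₂:ℕ)-1, by omega⟩ with ht₂'def
      have hk : (t₂':ℕ)+1 < m := by simp [ht₂'def]; omega
      have hkeq : (⟨(t₂':ℕ)+1, hk⟩ : Fin m) = t₂ := by
        apply Fin.ext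
        simp [ht₂'def]
        omega
      have hswap := col_swap_adj c d u t₂' hk
      rw [hkeq] at hswap
      set d'' := d ∘ Equiv.swap t₂' t₂ with hd''def
      have hne1 : t₁ ≠ t₂' := by
        intro h
        have := congrArg Fin.val h
        simp [ht₂'def] at this
        omega
      have hne2 : t₁ ≠ t₂ := by
        intro h
        have := congrArg Fin.val h
        omega
      have hd''t₁ : d'' t₁ = d t₁ := by
        simp [hd''def, Equiv.swap_apply_of_ne_of_ne hne1 hne2]
      have hd''t₂' : d'' t₂' = d t₂ := by
        simp [hd''def, Equiv.swap_apply_left]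
      have hzero : capelliMinorCD n m c d'' u = 0 := by
        apply ih c d'' u t₁ t₂'
        · simp [ht₂'def]; omega
        · rw [Fin.lt_def]; simp [ht₂'def]; omega
        · rw [hd''t₁, hd''t₂', heq]
      rw [hzero] at hswap
      rw [eq_comm, neg_eq_zero] at hswap
      exact hswap

lemma T1_eq (c d : Fin m → Fin n) (u : ℂ) (a b : Fin n) (hcinj : Function.Injective c)
    (t₀ : Fin m) (ht₀ : c t₀ = b) :
    ∑ σ : Equiv.Perm (Fin m), (Equiv.Perm.sign σ : ℤ) •
      ∑ k : Fin m, (if b = c (σ k) then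
        preP (fRow c d u σ) (k:ℕ) * capelliEntry n (u - (k:ℕ)) a (d k)
          * sufP (fRow c d u σ) (k:ℕ) else 0)
    = capelliMinorCD n m (Function.update c t₀ a) d u := by
  rw [minor_eq]
  apply Finset.sum_congr rfl
  intro σ _
  congr 1
  have hcond : ∀ k : Fin m, (b = c (σ k)) = (k = σ⁻¹ t₀) := by
    intro k
    apply propext; constructor
    · intro h
      have h2 : σ k = t₀ := hcinj (by rw [ht₀, ← h])
      rw [← h2]; simp
    · rintro rfl
      rw [show σ (σ⁻¹ t₀) = t₀ from Equiv.apply_symm_apply σ t₀, ht₀]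
  simp only [hcond]
  rw [Finset.sum_ite_eq' Finset.univ (σ⁻¹ t₀)
    (fun k => preP (fRow c d u σ) (k:ℕ) * capelliEntry n (u - (k:ℕ)) a (d k)
      * sufP (fRow c d u σ) (k:ℕ))]
  simp only [Finset.mem_univ, if_true]
  rw [lprod_split (fRow (Function.update c t₀ a) d u σ) (σ⁻¹ t₀)]
  have hpre : preP (fRow c d u σ) ((σ⁻¹ t₀ : Fin m):ℕ)
      = preP (fRow (Function.update c t₀ a) d u σ) ((σ⁻¹ t₀ : Fin m):ℕ) := by
    apply preP_congr
    intro t ht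
    have htne : t ≠ σ⁻¹ t₀ := by
      intro h; rw [h] at ht; omega
    have : σ t ≠ t₀ := by
      intro h
      apply htne
      rw [← h]; simp
    simp only [fRow, Function.update_of_ne this]
  have hsuf : sufP (fRow c d u σ) ((σ⁻¹ t₀ : Fin m):ℕ)
      = sufP (fRow (Function.update c t₀ a) d u σ) ((σ⁻¹ t₀ : Fin m):ℕ) := by
    apply sufP_congr
    intro t ht
    have htne : t ≠ σ⁻¹ t₀ := by
      intro h; rw [h] at ht; omega
    have : σ t ≠ t₀ := by
      intro h
      apply htne
      rw [← h]; simp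
    simp only [fRow, Function.update_of_ne this]
  have hmid : capelliEntry n (u - ((σ⁻¹ t₀ : Fin m):ℕ)) a (d (σ⁻¹ t₀))
      = fRow (Function.update c t₀ a) d u σ (σ⁻¹ t₀) := by
    simp only [fRow]
    have hsig : σ (σ⁻¹ t₀) = t₀ := Equiv.apply_symm_apply σ t₀
    rw [hsig, Function.update_self]
  rw [hpre, hsuf, hmid]

lemma T1_zero (c d : Fin m → Fin n) (u : ℂ) (a b : Fin n) (h : ∀ t, c t ≠ b) :
    ∑ σ : Equiv.Perm (Fin m), (Equiv.Perm.sign σ : ℤ) •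
      ∑ k : Fin m, (if b = c (σ k) then
        preP (fRow c d u σ) (k:ℕ) * capelliEntry n (u - (k:ℕ)) a (d k)
          * sufP (fRow c d u σ) (k:ℕ) else 0)
    = 0 := by
  apply Finset.sum_eq_zero
  intro σ _
  rw [Finset.sum_eq_zero, smul_zero]
  intro k _
  rw [if_neg]
  exact fun hh => h (σ k) hh.symm

lemma T2_eq (c d : Fin m → Fin n) (u : ℂ) (a b : Fin n) (hdinj : Function.Injective d)
    (k₀ : Fin m) (hk₀ : d k₀ = a) :
    ∑ σ : Equiv.Perm (Fin m), (Equiv.Perm.sign σ : ℤ) •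
      ∑ k : Fin m, (if d k = a then
        preP (fRow c d u σ) (k:ℕ) * capelliEntry n (u - (k:ℕ)) (c (σ k)) b
          * sufP (fRow c d u σ) (k:ℕ) else 0)
    = capelliMinorCD n m c (Function.update d k₀ b) u := by
  rw [minor_eq]
  apply Finset.sum_congr rfl
  intro σ _
  congr 1
  have hcond : ∀ k : Fin m, (d k = a) = (k = k₀) := by
    intro k
    apply propext; constructor
    · intro h
      exact hdinj (by rw [hk₀, h])
    · rintro rfl; exact hk₀
  simp only [hcond]
  rw [Finset.sum_ite_eq' Finset.univ k₀
    (fun k => preP (fRow c d u σ) (k:ℕ) * capelliEntry n (u - (k:ℕ)) (c (σ k)) b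
      * sufP (fRow c d u σ) (k:ℕ))]
  simp only [Finset.mem_univ, if_true]
  rw [lprod_split (fRow c (Function.update d k₀ b) u σ) k₀]
  have hpre : preP (fRow c d u σ) ((k₀:Fin m):ℕ)
      = preP (fRow c (Function.update d k₀ b) u σ) ((k₀:Fin m):ℕ) := by
    apply preP_congr
    intro t ht
    have htne : t ≠ k₀ := by intro h; rw [h] at ht; omega
    simp only [fRow, Function.update_of_ne htne]
  have hsuf : sufP (fRow c d u σ) ((k₀:Fin m):ℕ)
      = sufP (fRow c (Function.update d k₀ b) u σ) ((k₀:Fin m):ℕ) := by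
    apply sufP_congr
    intro t ht
    have htne : t ≠ k₀ := by intro h; rw [h] at ht; omega
    simp only [fRow, Function.update_of_ne htne]
  have hmid : capelliEntry n (u - ((k₀:Fin m):ℕ)) (c (σ k₀)) b
      = fRow c (Function.update d k₀ b) u σ k₀ := by
    simp only [fRow, Function.update_self]
  rw [hpre, hsuf, hmid]

lemma T2_zero (c d : Fin m → Fin n) (u : ℂ) (a b : Fin n) (h : ∀ t, d t ≠ a) :
    ∑ σ : Equiv.Perm (Fin m), (Equiv.Perm.sign σ : ℤ) •
      ∑ k : Fin m, (if d k = a then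
        preP (fRow c d u σ) (k:ℕ) * capelliEntry n (u - (k:ℕ)) (c (σ k)) b
          * sufP (fRow c d u σ) (k:ℕ) else 0)
    = 0 := by
  apply Finset.sum_eq_zero
  intro σ _
  rw [Finset.sum_eq_zero, smul_zero]
  intro k _
  rw [if_neg (h k)]

theorem stmt8 (n m : ℕ) (h1 : 1 ≤ m) (h2 : m ≤ n) (c d : Fin m → Fin n)
    (hc : StrictMono c) (hd : StrictMono d) (i j : Fin m) (u : ℂ) :
    Egen n (c i) (d j) * capelliMinorCD n m c d u
      = capelliMinorCD n m c d u * Egen n (c i) (d j) := by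
  rw [← sub_eq_zero]
  have step1 : Egen n (c i) (d j) * capelliMinorCD n m c d u
      - capelliMinorCD n m c d u * Egen n (c i) (d j)
    = (∑ σ : Equiv.Perm (Fin m), (Equiv.Perm.sign σ : ℤ) •
        ∑ k : Fin m, (if d j = c (σ k) then
          preP (fRow c d u σ) (k:ℕ) * capelliEntry n (u - (k:ℕ)) (c i) (d k)
            * sufP (fRow c d u σ) (k:ℕ) else 0))
      - (∑ σ : Equiv.Perm (Fin m), (Equiv.Perm.sign σ : ℤ) •
        ∑ k : Fin m, (if d k = c i then
          preP (fRow c d u σ) (k:ℕ) * capelliEntry n (u - (k:ℕ)) (c (σ k)) (d j)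
            * sufP (fRow c d u σ) (k:ℕ) else 0)) := by
    rw [minor_eq, Finset.mul_sum, Finset.sum_mul, ← Finset.sum_sub_distrib,
      ← Finset.sum_sub_distrib]
    apply Finset.sum_congr rfl
    intro σ _
    rw [mul_smul_comm, smul_mul_assoc, ← smul_sub, ← smul_sub, ← Finset.sum_sub_distrib]
    congr 1
    have hexp := lprod_comm_expand (Egen n (c i) (d j)) (fRow c d u σ)
    rw [hexp, add_sub_cancel_left]
    apply Finset.sum_congr rfl
    intro k _
    have hce := comm_entry n (u - (k:ℕ)) (c i) (d j) (c (σ k)) (d k)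
    have hfr : fRow c d u σ k = capelliEntry n (u - (k:ℕ)) (c (σ k)) (d k) := rfl
    rw [hfr, hce]
    split_ifs <;> noncomm_ring
  rw [step1, sub_eq_zero]
  by_cases hab : c i = d j
  · have e1 := T1_eq c d u (c i) (d j) hc.injective i hab
    have e2 := T2_eq c d u (c i) (d j) hd.injective j hab.symm
    rw [e1, e2, Function.update_eq_self, Function.update_eq_self]
  · have hT1z : (∑ σ : Equiv.Perm (Fin m), (Equiv.Perm.sign σ : ℤ) •
        ∑ k : Fin m, (if d j = c (σ k) then
          preP (fRow c d u σ) (k:ℕ) * capelliEntry n (u - (k:ℕ)) (c i) (d k)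
            * sufP (fRow c d u σ) (k:ℕ) else 0)) = 0 := by
      by_cases hex1 : ∃ t₀, c t₀ = d j
      · obtain ⟨t₀, ht₀⟩ := hex1
        have ht₀i : t₀ ≠ i := fun h => hab (by rw [← ht₀, h])
        rw [T1_eq c d u (c i) (d j) hc.injective t₀ ht₀]
        apply row_repeat_zero _ d u t₀ i ht₀i
        rw [Function.update_self, Function.update_of_ne (Ne.symm ht₀i)]
      · exact T1_zero c d u (c i) (d j) (fun t h => hex1 ⟨t, h⟩)
    have hT2z : (∑ σ : Equiv.Perm (Fin m), (Equiv.Perm.sign σ : ℤ) •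
        ∑ k : Fin m, (if d k = c i then
          preP (fRow c d u σ) (k:ℕ) * capelliEntry n (u - (k:ℕ)) (c (σ k)) (d j)
            * sufP (fRow c d u σ) (k:ℕ) else 0)) = 0 := by
      by_cases hex2 : ∃ k₀, d k₀ = c i
      · obtain ⟨k₀, hk₀⟩ := hex2
        have hk₀j : k₀ ≠ j := fun h => hab (by rw [← hk₀, h])
        rw [T2_eq c d u (c i) (d j) hd.injective k₀ hk₀]
        rcases hk₀j.lt_or_gt with hlt | hgt
        · apply col_repeat_zero_aux m c _ u k₀ j (by omega) hlt
          rw [Function.update_self, Function.update_of_ne (Ne.symm hk₀j)]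
        · apply col_repeat_zero_aux m c _ u j k₀ (by omega) hgt
          rw [Function.update_self, Function.update_of_ne (Ne.symm hk₀j)]
      · exact T2_zero c d u (c i) (d j) (fun t h => hex2 ⟨t, h⟩)
    rw [hT1z, hT2z]
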